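/- Let 𝓗 be a real Hilbert space, φ : 𝓗 → ℝ a continuously differentiable functional whose gradient ∇φ : 𝓗 → 𝓗 is completely continuous, and let Ω ⊂ 𝓗 be a bounded open set such that x - ∇φ(x) ≠ 0 for all x ∈ ∂Ω. Let (Pₙ) be a sequence of orthogonal projections on 𝓗 such that each subspace 𝓗ₙ := Pₙ(𝓗) is finite-dimensional, 𝓗ₙ ⊆ 𝓗ₙ₊₁ for all n, and Pₙ x → x as n → ∞ for every x ∈ 𝓗. Then there exists N ∈ ℕ such that for all n ≥ N, all t ∈ [0,1], and all x ∈ ∂Ω with x ∈ 𝓗ₙ₊₁, one has x - t Pₙ ∇φ(x) - (1-t) Pₙ₊₁ ∇φ(x) ≠ 0. -/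

import Mathlib

/-- Galerkin approximations of an admissible gradient field give admissible homotopies:
if `∇φ` is completely continuous and `x - ∇φ(x) ≠ 0` on `∂Ω` (`Ω` bounded open),
then for any approximation scheme `(Pₙ)` of orthogonal projections with
finite-dimensional increasing ranges converging strongly to the identity, for all
sufficiently large `n`, all `t ∈ [0,1]` and all `x ∈ ∂Ω ∩ 𝓗ₙ₊₁` one has
`x - tPₙ∇φ(x) - (1-t)Pₙ₊₁∇φ(x) ≠ 0`. -/
theorem galerkin_homotopy_admissible
    {𝓗 : Type*} [NormedAddCommGroup 𝓗] [InnerProductSpace ℝ 𝓗] [CompleteSpace 𝓗]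
    (φ : 𝓗 → ℝ) (hφ : ContDiff ℝ 1 φ)
    (hgc : Continuous (gradient φ))
    (hcc : ∀ s : Set 𝓗, Bornology.IsBounded s → IsCompact (closure (gradient φ '' s)))
    (Ω : Set 𝓗) (hΩo : IsOpen Ω) (hΩb : Bornology.IsBounded Ω)
    (hadm : ∀ x ∈ frontier Ω, x - gradient φ x ≠ 0)
    (P : ℕ → 𝓗 →L[ℝ] 𝓗)
    (hsa : ∀ (n : ℕ) (x y : 𝓗), (inner ℝ (P n x) y : ℝ) = inner ℝ x (P n y))
    (hid : ∀ (n : ℕ) (x : 𝓗), P n (P n x) = P n x)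
    (hfin : ∀ n : ℕ, FiniteDimensional ℝ (LinearMap.range (P n : 𝓗 →ₗ[ℝ] 𝓗)))
    (hmono : ∀ n : ℕ, LinearMap.range (P n : 𝓗 →ₗ[ℝ] 𝓗) ≤ LinearMap.range (P (n + 1) : 𝓗 →ₗ[ℝ] 𝓗))
    (hconv : ∀ x : 𝓗, Filter.Tendsto (fun n => P n x) Filter.atTop (nhds x)) :
    ∃ N : ℕ, ∀ n ≥ N, ∀ t ∈ Set.Icc (0 : ℝ) 1, ∀ x ∈ frontier Ω,
      x ∈ LinearMap.range (P (n + 1) : 𝓗 →ₗ[ℝ] 𝓗) →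
      x - t • P n (gradient φ x) - (1 - t) • P (n + 1) (gradient φ x) ≠ 0 := by
  classical
  -- The projections are norm-nonincreasing
  have hP1 : ∀ (n : ℕ) (x : 𝓗), ‖P n x‖ ≤ ‖x‖ := by
    intro n x
    have h1 : ‖P n x‖ ^ 2 = inner ℝ x (P n x) := by
      rw [← real_inner_self_eq_norm_sq, hsa n x (P n x), hid]
    have h2 : (inner ℝ x (P n x) : ℝ) ≤ ‖x‖ * ‖P n x‖ := real_inner_le_norm x (P n x)
    rcases eq_or_lt_of_le (norm_nonneg (P n x)) with h0 | h0
    · rw [← h0]; exact norm_nonneg x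
    · have : ‖P n x‖ * ‖P n x‖ ≤ ‖x‖ * ‖P n x‖ := by
        rw [← sq]; rw [h1]; exact h2
      exact le_of_mul_le_mul_right this h0
  -- the frontier is bounded
  have hfb : Bornology.IsBounded (frontier Ω) :=
    hΩb.closure.subset (frontier_subset_closure)
  set K := closure (gradient φ '' frontier Ω) with hKdef
  have hK : IsCompact K := hcc _ hfb
  -- the admissibility gap δ > 0
  have hδ : ∃ δ > (0 : ℝ), ∀ x ∈ frontier Ω, δ ≤ ‖x - gradient φ x‖ := by
    by_contra h
    push_neg at h
    have hseq : ∀ k : ℕ, ∃ x ∈ frontier Ω, ‖x - gradient φ x‖ < 1 / (k + 1) := by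
      intro k
      rcases h (1 / (k + 1)) (by positivity) with ⟨x, hx, hx'⟩
      exact ⟨x, hx, hx'⟩
    choose x hx hxn using hseq
    have hmem : ∀ k, gradient φ (x k) ∈ K :=
      fun k => subset_closure ⟨x k, hx k, rfl⟩
    obtain ⟨a, -, ψ, hψ, hlim⟩ := hK.tendsto_subseq hmem
    -- x ∘ ψ also tends to a
    have hdiff : Filter.Tendsto (fun k => x (ψ k) - gradient φ (x (ψ k)))
        Filter.atTop (nhds 0) := by
      rw [tendsto_zero_iff_norm_tendsto_zero]
      apply squeeze_zero (fun k => norm_nonneg _)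
        (fun k => (hxn (ψ k)).le.trans (by
          have : (k : ℝ) + 1 ≤ (ψ k : ℝ) + 1 := by
            exact_mod_cast Nat.succ_le_succ (hψ.le_apply)
          exact one_div_le_one_div_of_le (by positivity) this))
      exact tendsto_one_div_add_atTop_nhds_zero_nat
    have hxlim : Filter.Tendsto (fun k => x (ψ k)) Filter.atTop (nhds a) := by
      have := hdiff.add hlim
      simpa using this
    have haf : a ∈ frontier Ω :=
      isClosed_frontier.mem_of_tendsto hxlim
        (Filter.Eventually.of_forall fun k => hx (ψ k))
    have hga : Filter.Tendsto (fun k => gradient φ (x (ψ k))) Filter.atTop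
        (nhds (gradient φ a)) := (hgc.tendsto a).comp hxlim
    have : gradient φ a = a := tendsto_nhds_unique hga hlim
    exact hadm a haf (by rw [this]; simp)
  obtain ⟨δ, hδ0, hδle⟩ := hδ
  -- uniform convergence of P n on the compact set K
  have huc : ∃ N : ℕ, ∀ n ≥ N, ∀ z ∈ K, ‖P n z - z‖ < δ / 2 := by
    -- cover K by small balls
    have hcov : ∀ z ∈ K, ∃ N : ℕ, ∀ n ≥ N, ‖P n z - z‖ < δ / 8 := by
      intro z _
      have : Filter.Tendsto (fun n => P n z - z) Filter.atTop (nhds 0) := by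
        simpa using (hconv z).sub (tendsto_const_nhds (x := z))
      rw [tendsto_zero_iff_norm_tendsto_zero] at this
      have := (this.eventually (gt_mem_nhds (show (0:ℝ) < δ / 8 by positivity)))
      rcases this.exists_forall_of_atTop with ⟨N, hN⟩
      exact ⟨N, fun n hn => hN n hn⟩
    choose! Nz hNz using hcov
    obtain ⟨S, hSsub, hScov⟩ := hK.elim_nhds_subcover
      (fun z => Metric.ball z (δ / 8)) (fun z _ => Metric.ball_mem_nhds z (by positivity))
    refine ⟨S.sup Nz, fun n hn z hz => ?_⟩
    obtain ⟨c, hcS, hzc⟩ := Set.mem_iUnion₂.1 (hScov hz)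
    have hc : ‖P n c - c‖ < δ / 8 :=
      hNz c (hSsub c hcS) n (le_trans (Finset.le_sup hcS) hn)
    have hd : ‖z - c‖ < δ / 8 := by
      rw [← dist_eq_norm]; exact hzc
    calc ‖P n z - z‖ = ‖P n (z - c) + (P n c - c) + (c - z)‖ := by
          congr 1; rw [map_sub]; abel
      _ ≤ ‖P n (z - c)‖ + ‖P n c - c‖ + ‖c - z‖ := norm_add₃_le
      _ ≤ ‖z - c‖ + ‖P n c - c‖ + ‖c - z‖ := by
          gcongr; exact hP1 n _
      _ < δ / 8 + δ / 8 + δ / 8 := by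
          rw [norm_sub_rev c z]; gcongr
      _ < δ / 2 := by linarith
  obtain ⟨N, hN⟩ := huc
  refine ⟨N, fun n hn t ht x hx _ => ?_⟩
  set g := gradient φ x with hg
  have hgK : g ∈ K := subset_closure ⟨x, hx, rfl⟩
  have h1 : ‖P n g - g‖ < δ / 2 := hN n hn g hgK
  have h2 : ‖P (n + 1) g - g‖ < δ / 2 := hN (n + 1) (le_trans hn (Nat.le_succ n)) g hgK
  have ht0 := ht.1
  have ht1 := ht.2
  have key : x - t • P n g - (1 - t) • P (n + 1) g =
      (x - g) - t • (P n g - g) - (1 - t) • (P (n + 1) g - g) := by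
    module
  intro hcontra
  have hnorm : δ ≤ ‖x - t • P n g - (1 - t) • P (n + 1) g‖ + δ / 2 := by
    have hle := hδle x hx
    have : ‖x - g‖ ≤ ‖x - t • P n g - (1 - t) • P (n + 1) g‖
        + t * ‖P n g - g‖ + (1 - t) * ‖P (n + 1) g - g‖ := by
      calc ‖x - g‖ = ‖(x - t • P n g - (1 - t) • P (n + 1) g)
            + t • (P n g - g) + (1 - t) • (P (n + 1) g - g)‖ := by
            rw [key]; congr 1; module
        _ ≤ _ := by
            refine norm_add₃_le.trans ?_
            rw [norm_smul, norm_smul, Real.norm_eq_abs, Real.norm_eq_abs,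
              abs_of_nonneg ht0, abs_of_nonneg (by linarith : (0:ℝ) ≤ 1 - t)]
    have hb : t * ‖P n g - g‖ + (1 - t) * ‖P (n + 1) g - g‖ ≤ δ / 2 := by
      calc t * ‖P n g - g‖ + (1 - t) * ‖P (n + 1) g - g‖
          ≤ t * (δ / 2) + (1 - t) * (δ / 2) := by
            have e1 : t * ‖P n g - g‖ ≤ t * (δ / 2) :=
              mul_le_mul_of_nonneg_left h1.le ht0
            have e2 : (1 - t) * ‖P (n + 1) g - g‖ ≤ (1 - t) * (δ / 2) :=
              mul_le_mul_of_nonneg_left h2.le (by linarith)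
            linarith
        _ = δ / 2 := by ring
    linarith
  rw [hcontra] at hnorm
  simp at hnorm
  linarith
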